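/- For all t with 0 < t < π, 2t(2 + cos(2t)) - 3·sin(2t) > 0; consequently H(t) = (n-1)cot²(t) - (1/sin²(t))·(2 + (n-3)·t·cot(t)) is strictly increasing on (0,π) for n ≥ 4 and strictly decreasing for n = 2. -/

import Mathlib

open Real Set

lemma sin_sub_mul_cos_pos {t : ℝ} (h1 : 0 < t) (h2 : t < Real.pi) :
    0 < Real.sin t - t * Real.cos t := by
  rcases lt_or_ge t (Real.pi / 2) with h | h
  · have hc : 0 < Real.cos t := Real.cos_pos_of_mem_Ioo ⟨by linarith, h⟩
    have ht := Real.lt_tan h1 h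
    rw [Real.tan_eq_sin_div_cos] at ht
    have := (lt_div_iff₀ hc).1 ht
    linarith
  · have hc : Real.cos t ≤ 0 := Real.cos_nonpos_of_pi_div_two_le_of_le h (by linarith [Real.pi_pos])
    have hs : 0 < Real.sin t := Real.sin_pos_of_pos_of_lt_pi h1 h2
    nlinarith

lemma key1 (t : ℝ) (h1 : 0 < t) (h2 : t < Real.pi) :
    0 < 2 * t * (2 + Real.cos (2 * t)) - 3 * Real.sin (2 * t) := by
  set f : ℝ → ℝ := fun x => 2 * x * (2 + Real.cos (2 * x)) - 3 * Real.sin (2 * x) with hf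
  have hderiv : ∀ x : ℝ, HasDerivAt f
      (8 * Real.sin x * (Real.sin x - x * Real.cos x)) x := by
    intro x
    have h2x : HasDerivAt (fun y : ℝ => 2 * y) 2 x := by
      simpa using (hasDerivAt_id x).const_mul (2:ℝ)
    have hcos : HasDerivAt (fun y : ℝ => Real.cos (2 * y)) (-Real.sin (2 * x) * 2) x :=
      (Real.hasDerivAt_cos (2 * x)).comp x h2x
    have hsin : HasDerivAt (fun y : ℝ => Real.sin (2 * y)) (Real.cos (2 * x) * 2) x :=
      (Real.hasDerivAt_sin (2 * x)).comp x h2x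
    have := ((h2x.mul (hcos.const_add 2)).sub (hsin.const_mul 3))
    refine this.congr_deriv ?_
    rw [Real.cos_two_mul, Real.sin_two_mul]
    ring_nf
    nlinarith [Real.sin_sq_add_cos_sq x]
  have hmono : StrictMonoOn f (Set.Icc 0 Real.pi) := by
    apply strictMonoOn_of_deriv_pos (convex_Icc 0 Real.pi)
    · exact fun x _ => ((hderiv x).continuousAt).continuousWithinAt
    · intro x hx
      rw [interior_Icc] at hx
      rw [(hderiv x).deriv]
      have hs : 0 < Real.sin x := Real.sin_pos_of_pos_of_lt_pi hx.1 hx.2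
      have := sin_sub_mul_cos_pos hx.1 hx.2
      positivity
  have h0 : f 0 = 0 := by simp [hf]
  have := hmono (Set.mem_Icc.2 ⟨le_refl 0, Real.pi_pos.le⟩)
      (Set.mem_Icc.2 ⟨h1.le, h2.le⟩) h1
  rw [h0] at this
  exact this

lemma Hderiv (n : ℝ) (t : ℝ) (hs : Real.sin t ≠ 0) :
    HasDerivAt (fun t => (n - 1) * (Real.cos t / Real.sin t) ^ 2
      - (1 / Real.sin t ^ 2) * (2 + (n - 3) * t * (Real.cos t / Real.sin t)))
      ((n - 3) * (t * (1 + 2 * Real.cos t ^ 2) - 3 * Real.sin t * Real.cos t)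
        / Real.sin t ^ 4) t := by
  have hsin := Real.hasDerivAt_sin t
  have hcos := Real.hasDerivAt_cos t
  have hcot : HasDerivAt (fun t => Real.cos t / Real.sin t) (-(1 / Real.sin t ^ 2)) t := by
    have := hcos.div hsin hs
    refine this.congr_deriv ?_
    have hpy : -Real.sin t * Real.sin t - Real.cos t * Real.cos t = -1 := by
      nlinarith [Real.sin_sq_add_cos_sq t]
    rw [hpy]
    field_simp
  have hsq : HasDerivAt (fun t => Real.sin t ^ 2) (2 * Real.sin t ^ 1 * Real.cos t) t :=
    hsin.pow 2
  have hs2 : Real.sin t ^ 2 ≠ 0 := pow_ne_zero 2 hs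
  have hinv : HasDerivAt (fun t => 1 / Real.sin t ^ 2)
      ((0 * Real.sin t ^ 2 - 1 * (2 * Real.sin t ^ 1 * Real.cos t)) / (Real.sin t ^ 2) ^ 2) t :=
    (hasDerivAt_const t (1:ℝ)).div hsq hs2
  have hterm1 : HasDerivAt (fun t => (n - 1) * (Real.cos t / Real.sin t) ^ 2)
      ((n - 1) * (2 * (Real.cos t / Real.sin t) ^ 1 * -(1 / Real.sin t ^ 2))) t :=
    (hcot.pow 2).const_mul (n - 1)
  have hv : HasDerivAt (fun t => 2 + (n - 3) * t * (Real.cos t / Real.sin t))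
      ((n - 3) * (1 * (Real.cos t / Real.sin t) + t * -(1 / Real.sin t ^ 2))) t := by
    have h2 := (((hasDerivAt_id t).mul hcot).const_mul (n - 3)).const_add (2:ℝ)
    have hfun : (fun x : ℝ => 2 + (n - 3) * x * (Real.cos x / Real.sin x))
        = fun x : ℝ => 2 + (n - 3) * (id x * (Real.cos x / Real.sin x)) := by
      funext x; simp [mul_assoc]
    rw [hfun]
    exact h2
  have htotal := hterm1.sub (hinv.mul hv)
  refine htotal.congr_deriv ?_
  field_simp
  ring

theorem spherical_H_monotonicity (n : ℕ)
    (H : ℝ → ℝ)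
    (hH : ∀ t : ℝ, H t = ((n : ℝ) - 1) * (Real.cos t / Real.sin t) ^ 2
      - (1 / Real.sin t ^ 2) * (2 + ((n : ℝ) - 3) * t * (Real.cos t / Real.sin t))) :
    (∀ t : ℝ, 0 < t → t < Real.pi →
      0 < 2 * t * (2 + Real.cos (2 * t)) - 3 * Real.sin (2 * t)) ∧
    (4 ≤ n → StrictMonoOn H (Set.Ioo (0 : ℝ) Real.pi)) ∧
    (n = 2 → StrictAntiOn H (Set.Ioo (0 : ℝ) Real.pi)) := by
  have hHeq : H = fun t => ((n : ℝ) - 1) * (Real.cos t / Real.sin t) ^ 2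
      - (1 / Real.sin t ^ 2) * (2 + ((n : ℝ) - 3) * t * (Real.cos t / Real.sin t)) :=
    funext hH
  have hsin : ∀ t ∈ Set.Ioo (0:ℝ) Real.pi, 0 < Real.sin t :=
    fun t ht => Real.sin_pos_of_pos_of_lt_pi ht.1 ht.2
  have hcont : ContinuousOn H (Set.Ioo (0:ℝ) Real.pi) := by
    rw [hHeq]
    exact fun t ht => ((Hderiv (n:ℝ) t (hsin t ht).ne').continuousAt).continuousWithinAt
  have hderivH : ∀ t ∈ Set.Ioo (0:ℝ) Real.pi, deriv H t
      = ((n:ℝ) - 3) * (t * (1 + 2 * Real.cos t ^ 2) - 3 * Real.sin t * Real.cos t)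
        / Real.sin t ^ 4 := by
    intro t ht
    rw [hHeq]
    exact (Hderiv (n:ℝ) t (hsin t ht).ne').deriv
  have hpos : ∀ t ∈ Set.Ioo (0:ℝ) Real.pi,
      0 < t * (1 + 2 * Real.cos t ^ 2) - 3 * Real.sin t * Real.cos t := by
    intro t ht
    have h := key1 t ht.1 ht.2
    rw [Real.cos_two_mul, Real.sin_two_mul] at h
    nlinarith
  refine ⟨fun t h1 h2 => key1 t h1 h2, ?_, ?_⟩
  · intro hn
    apply strictMonoOn_of_deriv_pos (convex_Ioo 0 Real.pi) hcont
    intro t ht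
    rw [interior_Ioo] at ht
    rw [hderivH t ht]
    have hn3 : (0:ℝ) < (n:ℝ) - 3 := by
      have : (4:ℝ) ≤ (n:ℝ) := by exact_mod_cast hn
      linarith
    have := hpos t ht
    have hst := hsin t ht
    positivity
  · intro hn
    apply strictAntiOn_of_deriv_neg (convex_Ioo 0 Real.pi) hcont
    intro t ht
    rw [interior_Ioo] at ht
    rw [hderivH t ht]
    subst hn
    have := hpos t ht
    have hst := hsin t ht
    have h4 : (0:ℝ) < Real.sin t ^ 4 := by positivity
    have : ((2:ℕ):ℝ) - 3 = -1 := by norm_num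
    rw [this]
    rw [div_neg_iff]
    right
    constructor <;> nlinarith
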